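/- (Theorem 1, convergence) Let n ≥ n', let A be a real symmetric n×n matrix, A' a real symmetric n'×n' matrix, K a real n×n' matrix, λ ≥ 0, α ∈ (0,1], and ε ∈ (0,1) with ‖A‖₂·‖A'‖₂ < ε. Then for any initial real n×n' matrix X⁽⁰⁾, the sequence defined by X⁽ᵗ⁺¹⁾ = (1−α)X⁽ᵗ⁾ + α·P_d(A X⁽ᵗ⁾ A' + λK) converges (in Frobenius norm) to a limit X*. -/

import Mathlib

/-- The Frobenius norm of a real matrix. -/
noncomputable def frobNorm {m p : Type*} [Fintype m] [Fintype p] (A : Matrix m p ℝ) : ℝ :=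
  Real.sqrt (∑ i, ∑ j, (A i j) ^ 2)

/-- The spectral (ℓ₂ operator) norm of a real square matrix. -/
noncomputable def specNorm {m : Type*} [Fintype m] [DecidableEq m] (A : Matrix m m ℝ) : ℝ :=
  ‖Matrix.toEuclideanCLM (𝕜 := ℝ) A‖

/-- `Omega n n'` is the set of partial doubly stochastic matrices: real `n × n'` matrices
with row sums at most 1, column sums equal to 1, and nonnegative entries. -/
def Omega (n n' : ℕ) : Set (Matrix (Fin n) (Fin n') ℝ) :=
  {X | (∀ i, ∑ j, X i j ≤ 1) ∧ (∀ j, ∑ i, X i j = 1) ∧ (∀ i j, 0 ≤ X i j)}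

/-- The canonical linear equivalence between matrices and Euclidean space. -/
noncomputable def matE (n n' : ℕ) :
    Matrix (Fin n) (Fin n') ℝ ≃ₗ[ℝ] EuclideanSpace ℝ (Fin n × Fin n') :=
  (LinearEquiv.curry ℝ ℝ (Fin n) (Fin n')).symm.trans
    (WithLp.linearEquiv 2 ℝ ((Fin n × Fin n') → ℝ)).symm

lemma matE_apply {n n' : ℕ} (M : Matrix (Fin n) (Fin n') ℝ) (p : Fin n × Fin n') :
    matE n n' M p = M p.1 p.2 := rfl

lemma frobNorm_eq_norm {n n' : ℕ} (M : Matrix (Fin n) (Fin n') ℝ) :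
    frobNorm M = ‖matE n n' M‖ := by
  rw [EuclideanSpace.norm_eq, frobNorm]
  congr 1
  rw [Fintype.sum_prod_type]
  exact Finset.sum_congr rfl fun i _ => Finset.sum_congr rfl fun j _ => by
    rw [matE_apply, Real.norm_eq_abs, sq_abs]

lemma frobNorm_swap {m p : Type*} [Fintype m] [Fintype p] (M : Matrix m p ℝ) :
    frobNorm M = Real.sqrt (∑ j, ∑ i, (M i j) ^ 2) := by
  rw [frobNorm, Finset.sum_comm]

lemma frobNorm_transpose {m p : Type*} [Fintype m] [Fintype p] (M : Matrix m p ℝ) :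
    frobNorm M.transpose = frobNorm M := by
  rw [frobNorm_swap, frobNorm]
  rfl

lemma frob_mul_left {m p : Type*} [Fintype m] [DecidableEq m] [Fintype p]
    (B : Matrix m m ℝ) (N : Matrix m p ℝ) :
    frobNorm (B * N) ≤ specNorm B * frobNorm N := by
  have hB : 0 ≤ specNorm B := norm_nonneg _
  set c := specNorm B with hc
  have key : ∀ j, ∑ i, ((B * N) i j) ^ 2 ≤ c ^ 2 * ∑ i, (N i j) ^ 2 := by
    intro j
    have h1 : ∀ (M : Matrix m p ℝ), ∑ i, (M i j) ^ 2
        = ‖(WithLp.equiv 2 (m → ℝ)).symm (fun i => M i j)‖ ^ 2 := by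
      intro M
      rw [EuclideanSpace.norm_eq, Real.sq_sqrt (by positivity)]
      refine Finset.sum_congr rfl fun i _ => ?_
      rw [Real.norm_eq_abs, sq_abs]
      rfl
    rw [h1 (B * N), h1 N]
    have h2 : (WithLp.equiv 2 (m → ℝ)).symm (fun i => (B * N) i j)
        = Matrix.toEuclideanCLM (𝕜 := ℝ) B ((WithLp.equiv 2 (m → ℝ)).symm (fun i => N i j)) := by
      change _ = WithLp.toLp 2 (Matrix.mulVec B fun i => N i j)
      congr 1
    rw [h2]
    calc ‖Matrix.toEuclideanCLM (𝕜 := ℝ) B ((WithLp.equiv 2 (m → ℝ)).symm (fun i => N i j))‖ ^ 2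
        ≤ (c * ‖(WithLp.equiv 2 (m → ℝ)).symm (fun i => N i j)‖) ^ 2 :=
          pow_le_pow_left₀ (norm_nonneg _)
            ((Matrix.toEuclideanCLM (𝕜 := ℝ) B).le_opNorm _) 2
      _ = c ^ 2 * ‖(WithLp.equiv 2 (m → ℝ)).symm (fun i => N i j)‖ ^ 2 := by ring
  rw [frobNorm_swap, frobNorm_swap]
  calc Real.sqrt (∑ j, ∑ i, ((B * N) i j) ^ 2)
      ≤ Real.sqrt (∑ j, c ^ 2 * ∑ i, (N i j) ^ 2) :=
        Real.sqrt_le_sqrt (Finset.sum_le_sum fun j _ => key j)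
    _ = c * Real.sqrt (∑ j, ∑ i, (N i j) ^ 2) := by
        rw [← Finset.mul_sum, Real.sqrt_mul (by positivity), Real.sqrt_sq hB]

open scoped RealInnerProductSpace in
/-- The metric projection onto a convex set is nonexpansive. -/
lemma proj_nonexpansive {E : Type*} [NormedAddCommGroup E] [InnerProductSpace ℝ E]
    {S : Set E} (hS : Convex ℝ S) (P : E → E) (hmem : ∀ y, P y ∈ S)
    (hmin : ∀ y, ∀ d ∈ S, ‖y - P y‖ ≤ ‖y - d‖) (y₁ y₂ : E) :
    ‖P y₁ - P y₂‖ ≤ ‖y₁ - y₂‖ := by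
  have hne : Nonempty S := ⟨⟨P y₁, hmem y₁⟩⟩
  have hvar : ∀ y, ∀ w ∈ S, ⟪y - P y, w - P y⟫ ≤ 0 := by
    intro y
    have hiInf : ‖y - P y‖ = ⨅ w : S, ‖y - (w : E)‖ := by
      refine le_antisymm (le_ciInf fun w => hmin y w w.2) ?_
      exact ciInf_le ⟨0, by rintro x ⟨w, rfl⟩; exact norm_nonneg _⟩ (⟨P y, hmem y⟩ : S)
    exact (norm_eq_iInf_iff_real_inner_le_zero hS (hmem y)).mp hiInf
  have h1 := hvar y₁ (P y₂) (hmem y₂)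
  have h2 := hvar y₂ (P y₁) (hmem y₁)
  have key : ⟪P y₁ - P y₂, P y₁ - P y₂⟫ ≤ ⟪y₁ - y₂, P y₁ - P y₂⟫ := by
    have e1 : ⟪y₁ - y₂, P y₁ - P y₂⟫ - ⟪P y₁ - P y₂, P y₁ - P y₂⟫
        = -⟪y₁ - P y₁, P y₂ - P y₁⟫ - ⟪y₂ - P y₂, P y₁ - P y₂⟫ := by
      simp only [inner_sub_left, inner_sub_right, real_inner_comm]
      ring
    linarith
  have hcs := real_inner_le_norm (y₁ - y₂) (P y₁ - P y₂)
  rw [real_inner_self_eq_norm_mul_norm] at key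
  nlinarith [norm_nonneg (P y₁ - P y₂), norm_nonneg (y₁ - y₂)]

lemma omega_convex (n n' : ℕ) : Convex ℝ (Omega n n') := by
  rintro Y ⟨hY1, hY2, hY3⟩ Z ⟨hZ1, hZ2, hZ3⟩ a b ha hb hab
  refine ⟨fun i => ?_, fun j => ?_, fun i j => ?_⟩
  · have : ∑ j, (a • Y + b • Z) i j = a * ∑ j, Y i j + b * ∑ j, Z i j := by
      simp [Finset.mul_sum, Finset.sum_add_distrib, Matrix.add_apply, Matrix.smul_apply,
        smul_eq_mul]
    rw [this]
    calc a * ∑ j, Y i j + b * ∑ j, Z i j ≤ a * 1 + b * 1 := by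
          gcongr <;> [exact hY1 i; exact hZ1 i]
      _ = 1 := by rw [mul_one, mul_one, hab]
  · have : ∑ i, (a • Y + b • Z) i j = a * ∑ i, Y i j + b * ∑ i, Z i j := by
      simp [Finset.mul_sum, Finset.sum_add_distrib, Matrix.add_apply, Matrix.smul_apply,
        smul_eq_mul]
    rw [this, hY2 j, hZ2 j, mul_one, mul_one, hab]
  · have := add_nonneg (mul_nonneg ha (hY3 i j)) (mul_nonneg hb (hZ3 i j))
    simpa [Matrix.add_apply, Matrix.smul_apply, smul_eq_mul] using this

/-- (Theorem 1, convergence) With `α ∈ (0,1]`, `ε ∈ (0,1)` and `‖A‖₂·‖A'‖₂ < ε`, the FastPFP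
iterates `X⁽ᵗ⁺¹⁾ = (1−α)X⁽ᵗ⁾ + α·P_d(A X⁽ᵗ⁾ A' + λK)` converge in Frobenius norm to some
limit `X*`, for any initial matrix `X⁽⁰⁾`. -/
theorem fastPFP_converges (n n' : ℕ) (hn' : 0 < n') (hnn : n' ≤ n)
    (A : Matrix (Fin n) (Fin n) ℝ) (hA : A.IsSymm)
    (A' : Matrix (Fin n') (Fin n') ℝ) (hA' : A'.IsSymm)
    (K : Matrix (Fin n) (Fin n') ℝ) (lam : ℝ) (hlam : 0 ≤ lam)
    (α : ℝ) (hα : α ∈ Set.Ioc (0 : ℝ) 1) (ε : ℝ) (hε : ε ∈ Set.Ioo (0 : ℝ) 1)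
    (hspec : specNorm A * specNorm A' < ε)
    (Pd : Matrix (Fin n) (Fin n') ℝ → Matrix (Fin n) (Fin n') ℝ)
    (hPd_mem : ∀ Y, Pd Y ∈ Omega n n')
    (hPd_min : ∀ Y, ∀ D ∈ Omega n n', frobNorm (Y - Pd Y) ≤ frobNorm (Y - D))
    (X : ℕ → Matrix (Fin n) (Fin n') ℝ)
    (hX : ∀ t, X (t + 1) = (1 - α) • X t + α • Pd (A * X t * A' + lam • K)) :
    ∃ Xstar : Matrix (Fin n) (Fin n') ℝ,
      Filter.Tendsto (fun t => frobNorm (X t - Xstar)) Filter.atTop (nhds 0) := by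
  obtain ⟨hα0, hα1⟩ := hα
  obtain ⟨hε0, hε1⟩ := hε
  set e := matE n n' with he
  set S : Set (EuclideanSpace ℝ (Fin n × Fin n')) := e '' Omega n n' with hSdef
  have hSconv : Convex ℝ S := (omega_convex n n').linear_image e.toLinearMap
  set P : EuclideanSpace ℝ (Fin n × Fin n') → EuclideanSpace ℝ (Fin n × Fin n') :=
    fun y => e (Pd (e.symm y)) with hPdef
  have hPmem : ∀ y, P y ∈ S := fun y => ⟨_, hPd_mem _, rfl⟩
  have hPmin : ∀ y, ∀ d ∈ S, ‖y - P y‖ ≤ ‖y - d‖ := by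
    rintro y d ⟨D, hD, rfl⟩
    have h1 : y - P y = e (e.symm y - Pd (e.symm y)) := by
      rw [map_sub, e.apply_symm_apply]
    have h2 : y - e D = e (e.symm y - D) := by rw [map_sub, e.apply_symm_apply]
    rw [h1, h2, ← frobNorm_eq_norm, ← frobNorm_eq_norm]
    exact hPd_min _ _ hD
  have hfrob_nonneg : ∀ (M : Matrix (Fin n) (Fin n') ℝ), 0 ≤ frobNorm M := by
    intro M; rw [frobNorm]; positivity
  have hAA' : ∀ M : Matrix (Fin n) (Fin n') ℝ,
      frobNorm (A * M * A') ≤ ε * frobNorm M := by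
    intro M
    have hA'nn : (0:ℝ) ≤ specNorm A' := norm_nonneg _
    have hAnn : (0:ℝ) ≤ specNorm A := norm_nonneg _
    have h1 : frobNorm (A * M * A') ≤ specNorm A * frobNorm (M * A') := by
      rw [Matrix.mul_assoc]; exact frob_mul_left A (M * A')
    have h2 : frobNorm (M * A') ≤ specNorm A' * frobNorm M := by
      have ht : frobNorm (M * A') = frobNorm (A' * M.transpose) := by
        rw [← frobNorm_transpose (M * A'), Matrix.transpose_mul, hA'.eq]
      rw [ht]
      calc frobNorm (A' * M.transpose) ≤ specNorm A' * frobNorm M.transpose :=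
            frob_mul_left A' M.transpose
        _ = specNorm A' * frobNorm M := by rw [frobNorm_transpose]
    calc frobNorm (A * M * A') ≤ specNorm A * (specNorm A' * frobNorm M) := by
          refine h1.trans ?_
          exact mul_le_mul_of_nonneg_left h2 hAnn
      _ = specNorm A * specNorm A' * frobNorm M := by ring
      _ ≤ ε * frobNorm M := mul_le_mul_of_nonneg_right hspec.le (hfrob_nonneg M)
  set ρ : ℝ := 1 - α + α * ε with hρdef
  have hρ0 : 0 ≤ ρ := by nlinarith
  have hρ1 : ρ < 1 := by nlinarith
  set f : EuclideanSpace ℝ (Fin n × Fin n') → EuclideanSpace ℝ (Fin n × Fin n') :=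
    fun y => (1 - α) • y + α • P (e (A * e.symm y * A' + lam • K)) with hfdef
  have hLip : ∀ y₁ y₂, ‖f y₁ - f y₂‖ ≤ ρ * ‖y₁ - y₂‖ := by
    intro y₁ y₂
    have hP : ‖P (e (A * e.symm y₁ * A' + lam • K)) - P (e (A * e.symm y₂ * A' + lam • K))‖
        ≤ ε * ‖y₁ - y₂‖ := by
      calc ‖P (e (A * e.symm y₁ * A' + lam • K)) - P (e (A * e.symm y₂ * A' + lam • K))‖
          ≤ ‖e (A * e.symm y₁ * A' + lam • K) - e (A * e.symm y₂ * A' + lam • K)‖ :=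
            proj_nonexpansive hSconv P hPmem hPmin _ _
        _ = ‖e (A * (e.symm y₁ - e.symm y₂) * A')‖ := by
            rw [← map_sub]
            congr 2
            rw [add_sub_add_right_eq_sub, Matrix.mul_sub, Matrix.sub_mul]
        _ = frobNorm (A * (e.symm y₁ - e.symm y₂) * A') := (frobNorm_eq_norm _).symm
        _ ≤ ε * frobNorm (e.symm y₁ - e.symm y₂) := hAA' _
        _ = ε * ‖e (e.symm y₁ - e.symm y₂)‖ := by rw [frobNorm_eq_norm]
        _ = ε * ‖y₁ - y₂‖ := by rw [map_sub, e.apply_symm_apply, e.apply_symm_apply]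
    have hsplit : f y₁ - f y₂ = (1 - α) • (y₁ - y₂)
        + α • (P (e (A * e.symm y₁ * A' + lam • K)) - P (e (A * e.symm y₂ * A' + lam • K))) := by
      simp only [hfdef]
      rw [smul_sub, smul_sub, add_sub_add_comm]
    calc ‖f y₁ - f y₂‖
        ≤ ‖(1 - α) • (y₁ - y₂)‖ + ‖α • (P (e (A * e.symm y₁ * A' + lam • K))
            - P (e (A * e.symm y₂ * A' + lam • K)))‖ := by rw [hsplit]; exact norm_add_le _ _
      _ = |1 - α| * ‖y₁ - y₂‖ + |α| * ‖P (e (A * e.symm y₁ * A' + lam • K))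
            - P (e (A * e.symm y₂ * A' + lam • K))‖ := by
          rw [norm_smul, norm_smul, Real.norm_eq_abs, Real.norm_eq_abs]
      _ ≤ (1 - α) * ‖y₁ - y₂‖ + α * (ε * ‖y₁ - y₂‖) := by
          rw [abs_of_nonneg (by linarith), abs_of_nonneg hα0.le]
          gcongr
      _ = ρ * ‖y₁ - y₂‖ := by rw [hρdef]; ring
  have hcontr : ContractingWith ⟨ρ, hρ0⟩ f := by
    constructor
    · exact_mod_cast hρ1
    · exact LipschitzWith.of_dist_le_mul fun x y => by
        rw [dist_eq_norm, dist_eq_norm]; exact hLip x y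
  set y0 := e (X 0) with hy0
  have hiter : ∀ t, e (X t) = f^[t] y0 := by
    intro t
    induction t with
    | zero => rfl
    | succ t ih =>
      rw [Function.iterate_succ_apply', ← ih, hX t]
      show e _ = f (e (X t))
      simp only [hfdef, hPdef]
      rw [map_add, map_smul, map_smul, e.symm_apply_apply, e.symm_apply_apply]
  set ystar := ContractingWith.fixedPoint f hcontr with hys
  refine ⟨e.symm ystar, ?_⟩
  have hfix := hcontr.tendsto_iterate_fixedPoint y0
  have h0 : Filter.Tendsto (fun t => ‖f^[t] y0 - ystar‖) Filter.atTop (nhds 0) := by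
    simpa [hys] using (hfix.sub (tendsto_const_nhds (x := ystar))).norm
  refine h0.congr fun t => ?_
  rw [frobNorm_eq_norm, map_sub, e.apply_symm_apply, hiter t]
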